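/- Let E be an ordered field, U an elementary extension, O a convex valuation subring of U, and p a weakly (O∩E)-immediate complete unary type over E (i.e. for a realization x, val(x−E) has no maximum). Then the realization set Br(p)(U) of the breadth of p in U is an O-submodule of U, and for any realization x ∈ p(U) one has p(U) = x + Br(p)(U). -/

import Mathlib

/-- The realization set in `U` of the breadth `Br(x/E)` of the (convex) type of `x`
over `E`: all `y` with `|y| < b - a` for every `a, b ∈ E` with `a < x < b`. -/
def breadthOf {U : Type*} [Field U] [LinearOrder U] [IsStrictOrderedRing U] (E : Subfield U) (x : U) : Set U :=
  {y : U | ∀ a ∈ E, ∀ b ∈ E, a < x → x < b → |y| < b - a}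

/-- The realization set in `U` of the type of `x` over the (o-minimal) `E`,
i.e. of the cut of `x` over `E`. -/
def typeSet {U : Type*} [Field U] [LinearOrder U] [IsStrictOrderedRing U] (E : Subfield U) (x : U) : Set U :=
  {u : U | ∀ e ∈ E, (e < u ↔ e < x)}

/-- Convexity makes the valuation monotone in absolute value. -/
lemma valMono {U : Type*} [Field U] [LinearOrder U] [IsStrictOrderedRing U] (O : ValuationSubring U)
    (hconv : ∀ a b : U, a ∈ O → |b| ≤ |a| → b ∈ O) {a b : U} (h : |a| ≤ |b|) :
    O.valuation a ≤ O.valuation b := by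
  rcases eq_or_ne b 0 with rfl | hb
  · have ha : a = 0 := by
      have := abs_nonneg a
      have h0 : |a| ≤ 0 := by simpa using h
      exact abs_eq_zero.1 (le_antisymm h0 (abs_nonneg a))
    simp [ha]
  · have hb' : (0 : U) < |b| := abs_pos.2 hb
    have hmem : a / b ∈ O := by
      refine hconv 1 (a / b) (one_mem _) ?_
      rw [abs_one, abs_div]
      exact (div_le_one hb').2 h
    have h1 : O.valuation (a / b) ≤ 1 := O.valuation_le_one ⟨_, hmem⟩
    calc O.valuation a = O.valuation (a / b * b) := by rw [div_mul_cancel₀ _ hb]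
      _ = O.valuation (a / b) * O.valuation b := map_mul _ _ _
      _ ≤ 1 * O.valuation b := mul_le_mul_left h1 _
      _ = O.valuation b := one_mul _

lemma valStrict {U : Type*} [Field U] [LinearOrder U] [IsStrictOrderedRing U] (O : ValuationSubring U)
    (hconv : ∀ a b : U, a ∈ O → |b| ≤ |a| → b ∈ O) {a b : U}
    (h : O.valuation a < O.valuation b) : |a| < |b| := by
  by_contra hcon
  push_neg at hcon
  exact absurd h (not_lt.2 (valMono O hconv hcon))

/-- Key lemma: an element small w.r.t. all `E`-intervals around `x` has valuation
strictly below `v (x - c)` for every `c ∈ E`. -/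
lemma keyLemma {U : Type*} [Field U] [LinearOrder U] [IsStrictOrderedRing U] (E : Subfield U)
    (O : ValuationSubring U) (hconv : ∀ a b : U, a ∈ O → |b| ≤ |a| → b ∈ O)
    (x : U) (hx : x ∉ E)
    (hwim : ∀ c ∈ E, ∃ d ∈ E, O.valuation (x - d) < O.valuation (x - c))
    (y : U) (hy : ∀ a ∈ E, ∀ b ∈ E, a < x → x < b → |y| < b - a)
    {c : U} (hc : c ∈ E) : O.valuation y < O.valuation (x - c) := by
  obtain ⟨d, hd, hdc⟩ := hwim c hc
  obtain ⟨d', hd', hdd⟩ := hwim d hd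
  have hxd' : |x - d'| < |x - d| := valStrict O hconv hdd
  have h2mem : (2 : U) ∈ O := by
    have h1 : (1 : U) ∈ O := one_mem _
    have := add_mem h1 h1
    norm_num at this
    norm_num
  have h4mem : (4 : U) ∈ O := by
    have := mul_mem h2mem h2mem
    norm_num at this
    norm_num
  have h2v : O.valuation (2 : U) ≤ 1 := O.valuation_le_one ⟨_, h2mem⟩
  have h4v : O.valuation (4 : U) ≤ 1 := O.valuation_le_one ⟨_, h4mem⟩
  set ρ := |d' - d| with hρ
  have hρE : ρ ∈ E := by
    rcases abs_cases (d' - d) with ⟨h, _⟩ | ⟨h, _⟩ <;> rw [hρ, h]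
    · exact sub_mem hd' hd
    · exact neg_mem (sub_mem hd' hd)
  have hxρ : |x - d'| < ρ := by
    by_contra hcon
    push_neg at hcon
    have htri : |x - d| ≤ |x - d'| + |d' - d| := by
      calc |x - d| = |(x - d') + (d' - d)| := by ring_nf
        _ ≤ |x - d'| + |d' - d| := abs_add_le _ _
    have hle : |x - d| ≤ |2 * (x - d')| := by
      rw [abs_mul, abs_two]
      linarith
    have hv := valMono O hconv hle
    rw [map_mul] at hv
    have : O.valuation (x - d) ≤ O.valuation (x - d') :=
      le_trans hv (by
        calc O.valuation 2 * O.valuation (x - d') ≤ 1 * O.valuation (x - d') :=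
              mul_le_mul_left h2v _
          _ = O.valuation (x - d') := one_mul _)
    exact absurd hdd (not_lt.2 this)
  obtain ⟨hl, hr⟩ := abs_lt.1 hxρ
  have hlt : |y| < (d' + ρ) - (d' - ρ) :=
    hy (d' - ρ) (sub_mem hd' hρE) (d' + ρ) (add_mem hd' hρE)
      (by linarith) (by linarith)
  have hρb : ρ ≤ 2 * |x - d| := by
    have htri : |d' - d| ≤ |x - d'| + |x - d| := by
      calc |d' - d| = |(d' - x) + (x - d)| := by ring_nf
        _ ≤ |d' - x| + |x - d| := abs_add_le _ _
        _ = |x - d'| + |x - d| := by rw [abs_sub_comm]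
    linarith
  have hyb : |y| ≤ |4 * (x - d)| := by
    rw [abs_mul]
    have h4 : |(4 : U)| = 4 := by norm_num
    rw [h4]
    linarith
  have hv := valMono O hconv hyb
  rw [map_mul] at hv
  calc O.valuation y ≤ O.valuation 4 * O.valuation (x - d) := hv
    _ ≤ 1 * O.valuation (x - d) := mul_le_mul_left h4v _
    _ = O.valuation (x - d) := one_mul _
    _ < O.valuation (x - c) := hdc

/-- Converse: small valuation against all `x - c` puts `y` in the breadth. -/
lemma brOf {U : Type*} [Field U] [LinearOrder U] [IsStrictOrderedRing U] (E : Subfield U)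
    (O : ValuationSubring U) (hconv : ∀ a b : U, a ∈ O → |b| ≤ |a| → b ∈ O)
    (x : U) (y : U)
    (hval : ∀ c ∈ E, O.valuation y < O.valuation (x - c)) :
    y ∈ breadthOf E x := by
  intro a ha b hb hax hxb
  have h := valStrict O hconv (hval a ha)
  rw [abs_of_pos (sub_pos.2 hax)] at h
  linarith

/-- Let `E ≺ U` be ordered fields, `O` a convex valuation subring of
`U`, and `p = tp(x/E)` a weakly `(O ∩ E)`-immediate complete unary type over `E`
(i.e. `val (x - E)` has no maximum; multiplicatively: for every `c ∈ E` there is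
`d ∈ E` with `O.valuation (x - d) < O.valuation (x - c)`).  Then `Br(p)(U)` is an
`O`-submodule of `U` and `p(U) = x + Br(p)(U)`. -/
theorem stmt5 {U : Type*} [Field U] [LinearOrder U] [IsStrictOrderedRing U] (E : Subfield U)
    (O : ValuationSubring U) (hconv : ∀ a b : U, a ∈ O → |b| ≤ |a| → b ∈ O)
    (x : U) (hx : x ∉ E)
    (hwim : ∀ c ∈ E, ∃ d ∈ E, O.valuation (x - d) < O.valuation (x - c)) :
    ((0 : U) ∈ breadthOf E x ∧
      (∀ y z : U, y ∈ breadthOf E x → z ∈ breadthOf E x → y + z ∈ breadthOf E x) ∧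
      (∀ y : U, y ∈ breadthOf E x → -y ∈ breadthOf E x) ∧
      (∀ r : U, r ∈ O → ∀ y ∈ breadthOf E x, r * y ∈ breadthOf E x)) ∧
    typeSet E x = {u : U | ∃ y ∈ breadthOf E x, u = x + y} := by
  constructor
  · refine ⟨?_, ?_, ?_, ?_⟩
    · intro a _ b _ hax hxb
      rw [abs_zero]
      linarith
    · intro y z hy hz
      refine brOf E O hconv x _ (fun c hc => ?_)
      have hy' := keyLemma E O hconv x hx hwim y hy hc
      have hz' := keyLemma E O hconv x hx hwim z hz hc
      exact lt_of_le_of_lt (O.valuation.map_add y z) (max_lt hy' hz')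
    · intro y hy a ha b hb hax hxb
      rw [abs_neg]
      exact hy a ha b hb hax hxb
    · intro r hr y hy
      refine brOf E O hconv x _ (fun c hc => ?_)
      have hy' := keyLemma E O hconv x hx hwim y hy hc
      have hrv : O.valuation r ≤ 1 := O.valuation_le_one ⟨_, hr⟩
      calc O.valuation (r * y) = O.valuation r * O.valuation y := map_mul _ _ _
        _ ≤ 1 * O.valuation y := mul_le_mul_left hrv _
        _ = O.valuation y := one_mul _
        _ < O.valuation (x - c) := hy'
  · ext u
    simp only [typeSet, Set.mem_setOf_eq]
    constructor
    · intro hu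
      refine ⟨u - x, ?_, by ring⟩
      intro a ha b hb hax hxb
      have h1 : a < u := (hu a ha).2 hax
      have h2 : u ≤ b := by
        by_contra hcon
        push_neg at hcon
        exact absurd ((hu b hb).1 hcon) (not_lt.2 hxb.le)
      rw [abs_lt]
      constructor <;> linarith
    · rintro ⟨y, hy, rfl⟩ e he
      have hv := keyLemma E O hconv x hx hwim y hy he
      have habs : |y| < |x - e| := valStrict O hconv hv
      have hxe : x ≠ e := fun h => hx (h ▸ he)
      constructor
      · intro h
        by_contra hcon
        push_neg at hcon
        have hlt : x < e := lt_of_le_of_ne hcon hxe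
        rw [abs_of_neg (sub_neg.2 hlt)] at habs
        have := le_abs_self y
        linarith
      · intro h
        rw [abs_of_pos (sub_pos.2 h)] at habs
        have := neg_abs_le y
        linarith
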